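/- Let φ : ℝ → (0,1) solve the nonlocal traveling wave equation ∫_ℝ J₁(z−y)[φ(y)−φ(z)]dy − cφ'(z) + f(φ(z)) = 0 with c > 0, φ(−∞)=0, φ(+∞)=1, where f satisfies (F) and J₁ is the one-dimensional marginal of J. Then for each t₀ and each ε ∈ (0, η) (η small so that f' ≤ −ω on [−2η,2η] ∪ [1−2η,1+2η]), the function ū(x,t) = φ(x₁ + ct + 2ε‖f'‖δ⁻¹ω⁻¹(1 − e^{−ω(t−t₀)})) + εe^{−ω(t−t₀)} is a super-solution of u_t = ∫_{ℝ^N} J(x−y)[u(y,t)−u(x,t)]dy + f(u) on ℝ^N × [t₀,∞), where δ = min_{[−A,A]} φ' and A is chosen so that φ ≤ η/2 on (−∞,−A] and φ ≥ 1−η/2 on [A,∞), and f has been extended linearly outside [0,1] by f(s)=f'(0)s for s≤0, f(s)=f'(1)(s−1) for s≥1. -/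

import Mathlib

open MeasureTheory Set Real

instance prodVolAddInv (k : ℕ) : (volume : Measure (ℝ × (Fin k → ℝ))).IsAddLeftInvariant := by
  rw [Measure.volume_eq_prod]; infer_instance

instance prodVolNegInv (k : ℕ) : (volume : Measure (ℝ × (Fin k → ℝ))).IsNegInvariant := by
  constructor
  have h : (Neg.neg : ℝ × (Fin k → ℝ) → ℝ × (Fin k → ℝ))
      = Prod.map (Neg.neg : ℝ → ℝ) (Neg.neg : (Fin k → ℝ) → (Fin k → ℝ)) := rfl
  rw [Measure.neg_def, Measure.volume_eq_prod, h,
    ← Measure.map_prod_map _ _ measurable_neg measurable_neg,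
    Measure.map_neg_eq_self, Measure.map_neg_eq_self]

set_option maxHeartbeats 1000000

/-- Lemma 4.2 (super-solution half): with f extended linearly outside [0,1],
η small so that f' ≤ −ω near 0 and 1, A chosen so that φ is within η/2 of its limits
outside [−A,A], and δ a positive lower bound (the minimum) of φ' on [−A,A],
the function ū(x,t) = φ(x₁ + ct + 2ε‖f'‖δ⁻¹ω⁻¹(1 − e^{−ω(t−t₀)})) + εe^{−ω(t−t₀)}
is a super-solution of u_t = J∗u − u + f(u) on ℝ^N × [t₀,∞). -/
theorem stmt_14 {k : ℕ}
    (J : ℝ × (Fin k → ℝ) → ℝ) (hJpos : ∀ x, 0 ≤ J x)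
    (hJC1 : ContDiff ℝ 1 J) (hJsupp : HasCompactSupport J)
    (hJint : ∫ x, J x = 1)
    (J1 : ℝ → ℝ) (hJ1 : ∀ z, J1 z = ∫ y' : Fin k → ℝ, J (z, y'))
    (f f' : ℝ → ℝ) (hf : ∀ s, HasDerivAt f (f' s) s)
    (hfext0 : ∀ s ≤ (0:ℝ), f s = f' 0 * s)
    (hfext1 : ∀ s ≥ (1:ℝ), f s = f' 1 * (s - 1))
    (phi phi' : ℝ → ℝ) (hphi : ∀ z, HasDerivAt phi (phi' z) z)
    (c : ℝ) (hc : 0 < c)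
    (hwave : ∀ z, (∫ y, J1 (z - y) * (phi y - phi z)) - c * phi' z + f (phi z) = 0)
    (hphi0 : Filter.Tendsto phi Filter.atBot (nhds 0))
    (hphi1 : Filter.Tendsto phi Filter.atTop (nhds 1))
    (hphirange : ∀ z, 0 < phi z ∧ phi z < 1)
    (omega eta : ℝ) (homega : 0 < omega) (heta : 0 < eta)
    (hf'neg : ∀ s ∈ Icc (-2*eta) (2*eta) ∪ Icc (1-2*eta) (1+2*eta), f' s ≤ -omega)
    (A : ℝ) (hA : 0 < A)
    (hAleft : ∀ z ≤ -A, phi z ≤ eta/2) (hAright : ∀ z ≥ A, phi z ≥ 1 - eta/2)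
    (delta : ℝ) (hdelta : IsLeast (phi' '' Icc (-A) A) delta) (hdeltapos : 0 < delta)
    (Kf : ℝ) (hKfpos : 0 < Kf) (hKf : ∀ s, |f' s| ≤ Kf)
    (t0 eps : ℝ) (heps : 0 < eps) (heps' : eps < eta)
    (ubar : ℝ × (Fin k → ℝ) → ℝ → ℝ)
    (hubar : ∀ x t, ubar x t =
      phi (x.1 + c*t + 2*eps*Kf*delta⁻¹*omega⁻¹*(1 - Real.exp (-omega*(t - t0))))
        + eps * Real.exp (-omega*(t - t0))) :
    ∀ x : ℝ × (Fin k → ℝ), ∀ t ≥ t0,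
      phi' (x.1 + c*t + 2*eps*Kf*delta⁻¹*omega⁻¹*(1 - Real.exp (-omega*(t - t0))))
          * (c + 2*eps*Kf*delta⁻¹ * Real.exp (-omega*(t - t0)))
        - eps*omega*Real.exp (-omega*(t - t0))
      ≥ (∫ y, J (x - y) * (ubar y t - ubar x t)) + f (ubar x t) := by
  -- ## basic facts
  have hφc : Continuous phi := continuous_iff_continuousAt.mpr fun z => (hphi z).continuousAt
  have hφ0 : ∀ z, 0 < phi z := fun z => (hphirange z).1
  have hφ1 : ∀ z, phi z < 1 := fun z => (hphirange z).2
  have hφabs : ∀ z, |phi z| ≤ 1 := fun z => by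
    rw [abs_le]; constructor <;> nlinarith [hφ0 z, hφ1 z]
  have hfc : Continuous f := continuous_iff_continuousAt.mpr fun s => (hf s).continuousAt
  have hf0 : f 0 = 0 := by simpa using hfext0 0 le_rfl
  have hf1 : f 1 = 0 := by simpa using hfext1 1 le_rfl
  have hflip : ∀ a b : ℝ, |f b - f a| ≤ Kf * |b - a| := by
    intro a b
    have := convex_univ.norm_image_sub_le_of_norm_hasDerivWithin_le
      (f := f) (f' := f') (C := Kf)
      (fun s _ => (hf s).hasDerivWithinAt) (fun s _ => by simpa using hKf s)
      (mem_univ a) (mem_univ b)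
    simpa [Real.norm_eq_abs] using this
  have hfabs : ∀ s, |f s| ≤ Kf * |s| := fun s => by simpa [hf0] using hflip 0 s
  have homegaKf : omega ≤ Kf := by
    have h0 := hf'neg 0 (Or.inl ⟨by linarith, by linarith⟩)
    have h1 := (abs_le.mp (hKf 0)).1
    linarith
  -- ## J and J1 basics
  have hJcont : Continuous J := hJC1.continuous
  have hJintg : Integrable J := hJcont.integrable_of_hasCompactSupport hJsupp
  have hvol : (volume : Measure (ℝ × (Fin k → ℝ))) = (volume : Measure ℝ).prod volume :=
    Measure.volume_eq_prod ℝ (Fin k → ℝ)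
  have hJintp : Integrable J ((volume : Measure ℝ).prod volume) := by rwa [← hvol]
  have hJ1fun : J1 = fun z => ∫ y' : Fin k → ℝ, J (z, y') := funext hJ1
  have hJ1meas : StronglyMeasurable J1 := by
    rw [hJ1fun]; exact hJcont.stronglyMeasurable.integral_prod_right'
  have hJ1nn : ∀ z, 0 ≤ J1 z := fun z => by
    rw [hJ1 z]; exact integral_nonneg fun y' => hJpos _
  have hJ1intg : Integrable J1 := by
    rw [hJ1fun]; exact hJintp.integral_prod_left
  have hJ1one : ∫ z, J1 z = 1 := by
    rw [hJ1fun, ← integral_prod _ hJintp, ← hvol]; exact hJint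
  -- ## rewrite of the wave operator
  have hsplit : ∀ z : ℝ, (∫ y, J1 (z - y) * (phi y - phi z))
      = (∫ u, J1 u * phi (z - u)) - phi z := by
    intro z
    have i1 : Integrable (fun y => J1 (z - y)) := hJ1intg.comp_sub_left z
    have i2 : Integrable (fun y => J1 (z - y) * phi y) := by
      have : Integrable (fun y => phi y * J1 (z - y)) :=
        i1.bdd_mul (c := 1) hφc.aestronglyMeasurable (Filter.Eventually.of_forall fun y => by
          simpa [Real.norm_eq_abs] using hφabs y)
      simpa [mul_comm] using this
    have e1 : (fun y => J1 (z - y) * (phi y - phi z))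
        = fun y => J1 (z - y) * phi y - J1 (z - y) * phi z := by funext y; ring
    rw [e1, integral_sub i2 (i1.mul_const _)]
    congr 1
    · have h := integral_sub_left_eq_self (fun u => J1 u * phi (z - u)) volume z
      simp only [sub_sub_cancel] at h
      exact h
    · rw [integral_mul_const, integral_sub_left_eq_self J1 volume z, hJ1one, one_mul]
  have hψeq : ∀ z, phi' z = ((∫ u, J1 u * phi (z - u)) - phi z + f (phi z)) / c := by
    intro z
    have hw := hwave z
    rw [hsplit z] at hw
    field_simp
    linarith
  -- ## bounds on phi'
  have hcontsub : ∀ z : ℝ, Continuous fun u : ℝ => phi (z - u) := fun z =>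
    hφc.comp (continuous_const.sub continuous_id)
  have i3 : ∀ z : ℝ, Integrable fun u => J1 u * phi (z - u) := by
    intro z
    have : Integrable (fun u => phi (z - u) * J1 u) :=
      hJ1intg.bdd_mul (hcontsub z).aestronglyMeasurable
        (c := 1) (Filter.Eventually.of_forall fun u => by simpa [Real.norm_eq_abs] using hφabs (z - u))
    simpa [mul_comm] using this
  have hconvabs : ∀ z : ℝ, |∫ u, J1 u * phi (z - u)| ≤ 1 := by
    intro z
    have h1 : |∫ u, J1 u * phi (z - u)| ≤ ∫ u, |J1 u * phi (z - u)| := by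
      simpa only [Real.norm_eq_abs] using norm_integral_le_integral_norm (μ := volume) (fun u => J1 u * phi (z - u))
    have h2 : (∫ u, |J1 u * phi (z - u)|) ≤ ∫ u, J1 u := by
      refine integral_mono (i3 z).abs hJ1intg fun u => ?_
      rw [abs_mul, abs_of_nonneg (hJ1nn u)]
      nlinarith [hφabs (z - u), hJ1nn u, abs_nonneg (phi (z-u))]
    rw [hJ1one] at h2
    linarith
  have hM : ∀ z, |phi' z| ≤ (2 + Kf) / c := by
    intro z
    rw [hψeq z, abs_div, abs_of_pos hc]
    have h1 := hconvabs z
    have h2 := hφabs z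
    have h3 : |f (phi z)| ≤ Kf := by
      have := hfabs (phi z)
      nlinarith [hφabs z, abs_nonneg (phi z)]
    rw [div_le_div_iff_of_pos_right hc]
    rw [abs_le] at h1 h2 h3
    rw [abs_le]
    constructor <;> linarith
  -- ## derivative of the convolution and of phi'
  have hψm : Measurable phi' := by
    have : phi' = deriv phi := funext fun z => ((hphi z).deriv).symm
    rw [this]; exact measurable_deriv _
  have hconvderiv : ∀ z : ℝ, Integrable (fun u => J1 u * phi' (z - u)) ∧
      HasDerivAt (fun w => ∫ u, J1 u * phi (w - u)) (∫ u, J1 u * phi' (z - u)) z := by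
    intro z
    have h := hasDerivAt_integral_of_dominated_loc_of_deriv_le
      (F := fun w u => J1 u * phi (w - u)) (F' := fun w u => J1 u * phi' (w - u))
      (x₀ := z) (bound := fun u => |J1 u| * ((2 + Kf) / c)) (s := Metric.ball z 1) (Metric.ball_mem_nhds z one_pos)
      (Filter.Eventually.of_forall fun w =>
        (hJ1meas.aestronglyMeasurable.mul (hcontsub w).aestronglyMeasurable))
      (i3 z)
      (hJ1meas.aestronglyMeasurable.mul
        ((hψm.comp (measurable_const.sub measurable_id)).aestronglyMeasurable))
      (Filter.Eventually.of_forall fun u => fun w _ => by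
        rw [Real.norm_eq_abs, abs_mul]
        exact mul_le_mul_of_nonneg_left (hM (w - u)) (abs_nonneg _))
      (hJ1intg.abs.mul_const _)
      (Filter.Eventually.of_forall fun u => fun w _ => by
        simpa using ((hphi (w - u)).comp w ((hasDerivAt_id w).sub_const u)).const_mul (J1 u))
    exact h
  have hψderiv : ∀ z : ℝ, HasDerivAt phi'
      (((∫ u, J1 u * phi' (z - u)) - phi' z + f' (phi z) * phi' z) / c) z := by
    intro z
    have hfun : phi' = fun w => ((∫ u, J1 u * phi (w - u)) - phi w + f (phi w)) / c :=
      funext hψeq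
    have h1 : HasDerivAt (fun w => ((∫ u, J1 u * phi (w - u)) - phi w + f (phi w)) / c)
        (((∫ u, J1 u * phi' (z - u)) - phi' z + f' (phi z) * phi' z) / c) z :=
      (((hconvderiv z).2.sub (hphi z)).add ((hf (phi z)).comp z (hphi z))).div_const c
    exact h1.congr_of_eventuallyEq (Filter.Eventually.of_forall fun w => hψeq w)
  have hψcont : Continuous phi' :=
    continuous_iff_continuousAt.mpr fun z => (hψderiv z).continuousAt
  -- ## limits of phi' at infinity
  have hbddnorm : ∀ (w : ℝ) (u : ℝ), ‖J1 u * phi (w - u)‖ ≤ |J1 u| := by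
    intro w u
    rw [Real.norm_eq_abs, abs_mul]
    nlinarith [hφabs (w - u), abs_nonneg (J1 u), abs_nonneg (phi (w - u))]
  have hconvbot : Filter.Tendsto (fun w => ∫ u, J1 u * phi (w - u))
      Filter.atBot (nhds 0) := by
    have h := tendsto_integral_filter_of_dominated_convergence (μ := volume)
      (l := Filter.atBot) (F := fun w u => J1 u * phi (w - u)) (f := fun _ : ℝ => (0:ℝ))
      (bound := fun u => |J1 u|)
      (Filter.Eventually.of_forall fun w =>
        (hJ1meas.aestronglyMeasurable.mul (hcontsub w).aestronglyMeasurable))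
      (Filter.Eventually.of_forall fun w => Filter.Eventually.of_forall fun u => hbddnorm w u)
      hJ1intg.abs
      (Filter.Eventually.of_forall fun u => by
        have h1 : Filter.Tendsto (fun w : ℝ => w - u) Filter.atBot Filter.atBot := by
          simpa [sub_eq_add_neg] using
            Filter.tendsto_atBot_add_const_right Filter.atBot (-u) Filter.tendsto_id
        simpa using (hphi0.comp h1).const_mul (J1 u))
    simpa using h
  have hconvtop : Filter.Tendsto (fun w => ∫ u, J1 u * phi (w - u))
      Filter.atTop (nhds 1) := by
    have h := tendsto_integral_filter_of_dominated_convergence (μ := volume)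
      (l := Filter.atTop) (F := fun w u => J1 u * phi (w - u)) (f := fun u : ℝ => J1 u)
      (bound := fun u => |J1 u|)
      (Filter.Eventually.of_forall fun w =>
        (hJ1meas.aestronglyMeasurable.mul (hcontsub w).aestronglyMeasurable))
      (Filter.Eventually.of_forall fun w => Filter.Eventually.of_forall fun u => hbddnorm w u)
      hJ1intg.abs
      (Filter.Eventually.of_forall fun u => by
        have h1 : Filter.Tendsto (fun w : ℝ => w - u) Filter.atTop Filter.atTop := by
          simpa [sub_eq_add_neg] using
            Filter.tendsto_atTop_add_const_right Filter.atTop (-u) Filter.tendsto_id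
        simpa using (hphi1.comp h1).const_mul (J1 u))
    rwa [hJ1one] at h
  have hψfun : phi' = fun w => ((∫ u, J1 u * phi (w - u)) - phi w + f (phi w)) / c :=
    funext hψeq
  have hψbot : Filter.Tendsto phi' Filter.atBot (nhds 0) := by
    rw [hψfun]
    have h := ((hconvbot.sub hphi0).add ((hfc.tendsto 0).comp hphi0)).div_const c
    simpa [hf0] using h
  have hψtop : Filter.Tendsto phi' Filter.atTop (nhds 0) := by
    rw [hψfun]
    have h := ((hconvtop.sub hphi1).add ((hfc.tendsto 1).comp hphi1)).div_const c
    simpa [hf1] using h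
  -- ## nonnegativity of phi'
  have hψnonneg : ∀ z, 0 ≤ phi' z := by
    by_contra hcon
    push_neg at hcon
    obtain ⟨z₀, hz₀⟩ := hcon
    obtain ⟨b₁, hb₁⟩ := Filter.eventually_atBot.mp (hψbot.eventually (eventually_gt_nhds hz₀))
    obtain ⟨b₂, hb₂⟩ := Filter.eventually_atTop.mp (hψtop.eventually (eventually_gt_nhds hz₀))
    set lo := min b₁ z₀ with hlodef
    set hi := max b₂ z₀ with hhidef
    have hmemz₀ : z₀ ∈ Icc lo hi := ⟨min_le_right _ _, le_max_right _ _⟩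
    obtain ⟨zs, hzsmem, hzsmin⟩ := isCompact_Icc.exists_isMinOn ⟨z₀, hmemz₀⟩
      hψcont.continuousOn
    have hzs0 : phi' zs ≤ phi' z₀ := hzsmin hmemz₀
    have hzsneg : phi' zs < 0 := lt_of_le_of_lt hzs0 hz₀
    have hglobal : ∀ z, phi' zs ≤ phi' z := by
      intro z
      by_cases hz : z ∈ Icc lo hi
      · exact hzsmin hz
      · rw [mem_Icc, not_and_or] at hz
        rcases hz with hz | hz
        · push_neg at hz
          have h2 := hb₁ z (le_trans hz.le (min_le_left _ _))
          linarith
        · push_neg at hz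
          have h2 := hb₂ z (le_trans (le_max_left _ _) hz.le)
          linarith
    have hlo' : phi' z₀ < phi' lo := hb₁ lo (min_le_left _ _)
    have hhi' : phi' z₀ < phi' hi := hb₂ hi (le_max_left _ _)
    have hzs_lo : lo < zs := by
      rcases lt_or_eq_of_le hzsmem.1 with h | h
      · exact h
      · exfalso; rw [h] at hlo'; linarith
    have hzs_hi : zs < hi := by
      rcases lt_or_eq_of_le hzsmem.2 with h | h
      · exact h
      · exfalso; rw [← h] at hhi'; linarith
    have hloc : IsLocalMin phi' zs := hzsmin.isLocalMin (Icc_mem_nhds hzs_lo hzs_hi)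
    have hderiv0 := hloc.hasDerivAt_eq_zero (hψderiv zs)
    have hIge : phi' zs ≤ ∫ u, J1 u * phi' (zs - u) := by
      have h1 : ∀ u, J1 u * phi' zs ≤ J1 u * phi' (zs - u) := fun u =>
        mul_le_mul_of_nonneg_left (hglobal _) (hJ1nn u)
      have h2 := integral_mono (hJ1intg.mul_const (phi' zs)) (hconvderiv zs).1 h1
      rwa [integral_mul_const, hJ1one, one_mul] at h2
    have heq0 : (∫ u, J1 u * phi' (zs - u)) - phi' zs + f' (phi zs) * phi' zs = 0 := by
      field_simp at hderiv0
      linarith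
    have hf'nonneg : 0 ≤ f' (phi zs) := by nlinarith
    have hzsout : zs ∉ Icc (-A) A := by
      intro hmem
      have := hdelta.2 ⟨zs, hmem, rfl⟩
      linarith
    rw [mem_Icc, not_and_or] at hzsout
    rcases hzsout with h | h
    · push_neg at h
      have hφ : phi zs ≤ eta/2 := hAleft zs h.le
      have := hf'neg (phi zs) ((Set.mem_union _ _ _).mpr (Or.inl (Set.mem_Icc.mpr
        ⟨by nlinarith [hφ0 zs], by linarith⟩)))
      linarith
    · push_neg at h
      have hφ : phi zs ≥ 1 - eta/2 := hAright zs h.le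
      have := hf'neg (phi zs) ((Set.mem_union _ _ _).mpr (Or.inr (Set.mem_Icc.mpr
        ⟨by linarith, by nlinarith [hφ1 zs]⟩)))
      linarith
  -- ## main computation
  intro x t ht
  have hE0 : 0 < Real.exp (-omega*(t - t0)) := Real.exp_pos _
  have hE1 : Real.exp (-omega*(t - t0)) ≤ 1 := by
    rw [Real.exp_le_one_iff]
    nlinarith
  set E := Real.exp (-omega*(t - t0)) with hEdef
  set sh := 2*eps*Kf*delta⁻¹*omega⁻¹*(1 - E) with hshdef
  set ξ := x.1 + c*t + sh with hXdef
  have habs2 : ∀ (a b : ℝ), |phi a - phi b| ≤ 1 := fun a b => by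
    rw [abs_le]; constructor <;> nlinarith [hφ0 a, hφ1 a, hφ0 b, hφ1 b]
  have hintid : (∫ y, J (x - y) * (ubar y t - ubar x t)) = c * phi' ξ - f (phi ξ) := by
    have e1 : (∫ y, J (x - y) * (ubar y t - ubar x t))
        = ∫ y : ℝ × (Fin k → ℝ), J (x - y) * (phi (y.1 + c*t + sh) - phi ξ) := by
      congr 1; funext y
      rw [hubar y t, hubar x t, ← hEdef, ← hshdef, ← hXdef]
      ring
    have hcont2 : Continuous fun y : ℝ × (Fin k → ℝ) =>
        phi (x.1 - y.1 + c*t + sh) - phi ξ :=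
      (hφc.comp (((continuous_const.sub continuous_fst).add continuous_const).add
        continuous_const)).sub continuous_const
    have hint2 : Integrable (fun y : ℝ × (Fin k → ℝ) =>
        J y * (phi (x.1 - y.1 + c*t + sh) - phi ξ)) ((volume : Measure ℝ).prod volume) := by
      refine Integrable.mono' hJintp
        (hJcont.aestronglyMeasurable.mul hcont2.aestronglyMeasurable) ?_
      refine Filter.Eventually.of_forall fun y => ?_
      rw [Real.norm_eq_abs, abs_mul, abs_of_nonneg (hJpos y)]
      nlinarith [habs2 (x.1 - y.1 + c*t + sh) ξ, hJpos y,
        abs_nonneg (phi (x.1 - y.1 + c*t + sh) - phi ξ)]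
    have e2 : (∫ y : ℝ × (Fin k → ℝ), J (x - y) * (phi (y.1 + c*t + sh) - phi ξ))
        = ∫ y : ℝ × (Fin k → ℝ), J y * (phi (x.1 - y.1 + c*t + sh) - phi ξ) := by
      have h := integral_sub_left_eq_self
        (fun y : ℝ × (Fin k → ℝ) => J y * (phi (x.1 - y.1 + c*t + sh) - phi ξ)) volume x
      rw [← h]
      congr 1; funext y
      simp only [Prod.fst_sub, sub_sub_cancel]
    have e3 : (∫ y : ℝ × (Fin k → ℝ), J y * (phi (x.1 - y.1 + c*t + sh) - phi ξ))
        = ∫ y1 : ℝ, J1 y1 * (phi (x.1 - y1 + c*t + sh) - phi ξ) := by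
      rw [hvol, integral_prod _ hint2]
      congr 1; funext y1
      rw [show (fun y2 : Fin k → ℝ => J (y1, y2) * (phi (x.1 - (y1, y2).1 + c*t + sh) - phi ξ))
          = fun y2 : Fin k → ℝ => J (y1, y2) * (phi (x.1 - y1 + c*t + sh) - phi ξ) from rfl]
      rw [integral_mul_const, ← hJ1 y1]
    have e4 : (∫ y1 : ℝ, J1 y1 * (phi (x.1 - y1 + c*t + sh) - phi ξ))
        = ∫ y, J1 (ξ - y) * (phi y - phi ξ) := by
      have h := integral_sub_left_eq_self (fun y : ℝ => J1 (ξ - y) * (phi y - phi ξ)) volume ξ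
      rw [← h]
      congr 1; funext y1
      simp only [sub_sub_cancel]
      have harg : x.1 - y1 + c*t + sh = ξ - y1 := by rw [hXdef]; ring
      rw [harg]
    rw [e1, e2, e3, e4]
    have hw := hwave ξ
    linarith
  rw [ge_iff_le, hintid, hubar x t, ← hEdef, ← hshdef, ← hXdef]
  have hεE : 0 < eps * E := mul_pos heps hE0
  obtain ⟨θ, hθmem, hθval⟩ := exists_hasDerivAt_eq_slope f f'
    (show phi ξ < phi ξ + eps*E by linarith) (hfc.continuousOn) (fun s _ => hf s)
  have hfeq : f (phi ξ + eps*E) - f (phi ξ) = f' θ * (eps*E) := by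
    rw [hθval, show phi ξ + eps*E - phi ξ = eps*E by ring, div_mul_cancel₀ _ hεE.ne']
  have key : f' θ + omega ≤ 2*Kf*delta⁻¹*phi' ξ := by
    by_cases hmem : ξ ∈ Icc (-A) A
    · have h1 : delta ≤ phi' ξ := hdelta.2 ⟨ξ, hmem, rfl⟩
      have h3 : delta⁻¹ * delta = 1 := inv_mul_cancel₀ hdeltapos.ne'
      have h4 : 2*Kf*delta⁻¹*delta ≤ 2*Kf*delta⁻¹*phi' ξ := by
        apply mul_le_mul_of_nonneg_left h1
        positivity
      have h5 : f' θ ≤ Kf := (abs_le.mp (hKf θ)).2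
      nlinarith
    · rw [mem_Icc, not_and_or] at hmem
      have hf'θ : f' θ ≤ -omega := by
        have hθlb := hθmem.1
        have hθub := hθmem.2
        have hepsE : eps * E ≤ eps := by nlinarith
        rcases hmem with h | h
        · push_neg at h
          have hφξ : phi ξ ≤ eta/2 := hAleft ξ h.le
          refine hf'neg θ ((Set.mem_union _ _ _).mpr (Or.inl (Set.mem_Icc.mpr
            ⟨?_, ?_⟩)))
          · nlinarith [hφ0 ξ]
          · nlinarith
        · push_neg at h
          have hφξ : phi ξ ≥ 1 - eta/2 := hAright ξ h.le
          refine hf'neg θ ((Set.mem_union _ _ _).mpr (Or.inr (Set.mem_Icc.mpr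
            ⟨?_, ?_⟩)))
          · nlinarith
          · nlinarith [hφ1 ξ]
      have hψ : 0 ≤ phi' ξ := hψnonneg ξ
      have h6 : 0 ≤ 2*Kf*delta⁻¹*phi' ξ := by positivity
      linarith
  have hmul := mul_le_mul_of_nonneg_left key hεE.le
  nlinarith [hmul, hfeq]
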